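/- Wind-speed scaling invariance: let E, g_k ∈ ℝ and v_w > 0. Suppose q : ℝ → ℝ⁴ and l : ℝ → ℝ are differentiable, l(t) ≠ 0 for all t, and (q, l) solves the quaternion kite equations of motion with wind speed 1, steering δ(t) and winch speed l̇(t) = u(t). Then the time-rescaled functions q̃(t) = q(v_w·t), l̃(t) = l(v_w·t) solve the quaternion kite equations of motion with wind speed v_w, steering δ̃(t) = δ(v_w·t), and winch speed l̃̇(t) = v_w·u(v_w·t). (Hence solutions for different wind speeds are obtained by scaling the time axis proportionally to 1/v_w when the winch speed is defined relative to the wind speed.) -/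

import Mathlib

noncomputable def kitePhi (E vw gk δ l ldot : ℝ) (q : EuclideanSpace ℝ (Fin 4)) :
    EuclideanSpace ℝ (Fin 4) :=
  let va := E * vw * (q 0 ^ 2 + q 1 ^ 2 - q 2 ^ 2 - q 3 ^ 2) - E * ldot
  (va / (2 * l)) • (WithLp.toLp 2 ![-(q 2), -(q 3), q 0, q 1] : EuclideanSpace ℝ (Fin 4))
    + (vw / l) • (WithLp.toLp 2 ![q 0 * (q 2 ^ 2 + q 3 ^ 2), q 1 * (q 2 ^ 2 + q 3 ^ 2),
        -(q 2) * (q 0 ^ 2 + q 1 ^ 2), -(q 3) * (q 0 ^ 2 + q 1 ^ 2)] :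
        EuclideanSpace ℝ (Fin 4))
    + (gk * va * δ / 2) • (WithLp.toLp 2 ![q 1, -(q 0), -(q 3), q 2] : EuclideanSpace ℝ (Fin 4))

lemma kitePhi_scale (E gk vw δ l u : ℝ) (q : EuclideanSpace ℝ (Fin 4)) :
    kitePhi E vw gk δ l (vw * u) q = vw • kitePhi E 1 gk δ l u q := by
  ext i
  fin_cases i <;>
  · simp [kitePhi, PiLp.add_apply, PiLp.smul_apply, smul_eq_mul]
    ring

theorem kite_wind_scaling (E gk vw : ℝ) (hvw : 0 < vw)
    (q : ℝ → EuclideanSpace ℝ (Fin 4)) (l δ u : ℝ → ℝ)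
    (hl : ∀ t, l t ≠ 0)
    (hq : ∀ t, HasDerivAt q (kitePhi E 1 gk (δ t) (l t) (u t) (q t)) t)
    (hld : ∀ t, HasDerivAt l (u t) t) :
    (∀ t, HasDerivAt (fun s => q (vw * s))
        (kitePhi E vw gk (δ (vw * t)) (l (vw * t)) (vw * u (vw * t))
          (q (vw * t))) t) ∧
    (∀ t, HasDerivAt (fun s => l (vw * s)) (vw * u (vw * t)) t) := by
  have hlin : ∀ t : ℝ, HasDerivAt (fun s : ℝ => vw * s) vw t := fun t => by
    simpa using (hasDerivAt_id t).const_mul vw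
  constructor
  · intro t
    have := (hq (vw * t)).scomp t (hlin t)
    rw [kitePhi_scale]
    simpa [Function.comp_def] using this
  · intro t
    have := (hld (vw * t)).comp t (hlin t)
    simpa [mul_comm, Function.comp_def] using this
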